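/- For every M ≥ 0, q^{M(M-1)/2} = ∑_{i=0}^∞ (q^{-M};q)_{2i} / (q^2;q^2)_i · (-1)^i q^{-i^2 + 2iM}, where the sum is finite because (q^{-M};q)_{2i} = 0 for 2i > M. -/

import Mathlib

open Finset

/-- q-Pochhammer symbol (a;q)_n. -/
noncomputable def qPoch {K : Type*} [Field K] (q a : K) (n : ℕ) : K :=
  ∏ j ∈ Finset.range n, (1 - a * q ^ j)

/-- Gaussian (q-)binomial coefficient. -/
noncomputable def qbinom {K : Type*} [Field K] (q : K) (n k : ℕ) : K :=
  if k ≤ n then qPoch q q n / (qPoch q q k * qPoch q q (n - k)) else 0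

lemma qPoch_succ {K : Type*} [Field K] (q a : K) (n : ℕ) :
    qPoch q a (n+1) = qPoch q a n * (1 - a * q ^ n) :=
  Finset.prod_range_succ _ n

lemma qPoch_succ' {K : Type*} [Field K] (q a : K) (n : ℕ) :
    qPoch q a (n+1) = qPoch q (a * q) n * (1 - a) := by
  unfold qPoch
  rw [Finset.prod_range_succ']
  congr 1
  · exact Finset.prod_congr rfl fun j _ => by ring
  · rw [pow_zero, mul_one]

/-- summand -/
noncomputable def Tq (q : RatFunc ℚ) (M i : ℕ) : RatFunc ℚ :=
  qPoch q (q ^ (-(M : ℤ))) (2 * i) / qPoch (q ^ 2) (q ^ 2) i *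
    (-1) ^ i * q ^ (-(i : ℤ) ^ 2 + 2 * i * M)

/-- telescoping certificate -/
noncomputable def Gq (q : RatFunc ℚ) (M : ℕ) : ℕ → RatFunc ℚ
  | 0 => 0
  | (j+1) => (-1) ^ (j+1) * (qPoch q (q ^ (-(M : ℤ))) (2*j+1) / qPoch (q ^ 2) (q ^ 2) j) *
      (q ^ ((2*M+2)*(j+1)) / q ^ ((j+1)^2 + M + 1))

section Aux

variable (q : RatFunc ℚ) (hq0 : q ≠ 0) (hone : ∀ n : ℕ, q ^ (n+1) ≠ 1)

include hq0 hone

omit hq0 in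
lemma hu_ne (k : ℕ) : (1 : RatFunc ℚ) - q ^ 2 * (q ^ 2) ^ k ≠ 0 := by
  have h : q ^ 2 * (q ^ 2) ^ k = q ^ (2*k+1+1) := by
    rw [← pow_mul, ← pow_add]
    congr 1
    omega
  rw [h]
  exact sub_ne_zero_of_ne (Ne.symm (hone _))

omit hq0 in
lemma hden_ne (k : ℕ) : qPoch (q ^ 2) (q ^ 2) k ≠ 0 := by
  unfold qPoch
  rw [Finset.prod_ne_zero_iff]
  exact fun j _ => hu_ne q hone j

omit hone

lemma qPoch_zero_of_lt (M n : ℕ) (h : M < n) : qPoch q (q ^ (-(M : ℤ))) n = 0 := by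
  unfold qPoch
  apply Finset.prod_eq_zero (Finset.mem_range.mpr h)
  rw [zpow_neg, zpow_natCast, inv_mul_cancel₀ (pow_ne_zero M hq0), sub_self]

include hone

set_option maxHeartbeats 2000000 in
lemma t_sub (M i : ℕ) :
    Tq q (M+1) i - q ^ M * Tq q M i = Gq q M (i+1) - Gq q M i := by
  have hm : q ^ (-(M : ℤ)) = (q ^ M)⁻¹ := by rw [zpow_neg, zpow_natCast]
  have hm1 : q ^ (-((M+1 : ℕ) : ℤ)) = (q ^ (M+1))⁻¹ := by rw [zpow_neg, zpow_natCast]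
  have hqsub : ∀ c d : ℕ, q ^ ((c : ℤ) - (d : ℤ)) = q ^ c / q ^ d := fun c d => by
    rw [zpow_sub₀ hq0, zpow_natCast, zpow_natCast]
  cases i with
  | zero =>
    simp only [Tq, Gq, Nat.mul_zero, qPoch, Finset.prod_range_zero, Finset.prod_range_one,
      pow_zero, pow_one, Nat.cast_zero]
    rw [hm]
    have e0 : (-(0:ℤ)^2 + 2*0*((M+1:ℕ):ℤ)) = 0 := by ring
    have e0' : (-(0:ℤ)^2 + 2*0*(M:ℤ)) = 0 := by ring
    rw [e0, e0', zpow_zero]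
    norm_num
    rw [show 2 * M + 2 = M + (M + 1 + 1) by omega, pow_add]
    field_simp
    ring_nf
  | succ k =>
    have hb : q ^ (-((M+1:ℕ) : ℤ)) * q = q ^ (-(M:ℤ)) := by
      rw [← zpow_add_one₀ hq0]
      congr 1
      push_cast
      ring
    have hA : qPoch q (q ^ (-((M+1:ℕ) : ℤ))) (2*k+1+1)
        = qPoch q (q ^ (-(M : ℤ))) (2*k+1) * (1 - q ^ (-((M+1:ℕ) : ℤ))) := by
      rw [qPoch_succ', hb]
    have hB : qPoch q (q ^ (-(M : ℤ))) (2*k+1+1)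
        = qPoch q (q ^ (-(M : ℤ))) (2*k+1) * (1 - q ^ (-(M : ℤ)) * q ^ (2*k+1)) :=
      qPoch_succ _ _ _
    have hC : qPoch q (q ^ (-(M : ℤ))) (2*k+1+1+1)
        = qPoch q (q ^ (-(M : ℤ))) (2*k+1) * (1 - q ^ (-(M : ℤ)) * q ^ (2*k+1))
            * (1 - q ^ (-(M : ℤ)) * q ^ (2*k+1+1)) := by
      rw [qPoch_succ, hB]
    have hD' : qPoch (q^2) (q^2) (k+1) = qPoch (q^2) (q^2) k * (1 - q^2 * (q^2)^k) :=
      qPoch_succ _ _ _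
    have e1 : (-((k+1:ℕ) : ℤ)^2 + 2*((k+1:ℕ):ℤ)*((M+1:ℕ):ℤ))
        = ((2*(k+1)*(M+1) : ℕ) : ℤ) - (((k+1)^2 : ℕ) : ℤ) := by push_cast; ring
    have e2 : (-((k+1:ℕ) : ℤ)^2 + 2*((k+1:ℕ):ℤ)*(M:ℤ))
        = ((2*(k+1)*M : ℕ) : ℤ) - (((k+1)^2 : ℕ) : ℤ) := by push_cast; ring
    have h2k : 2*(k+1) = 2*k+1+1 := by ring
    have h2k' : 2*(k+1)+1 = 2*k+1+1+1 := by ring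
    simp only [Tq, Gq, h2k, h2k']
    rw [hA, hB, hC, hD', e1, e2, hqsub, hqsub, hm, hm1]
    have hDk : qPoch (q^2) (q^2) k ≠ 0 := hden_ne q hone k
    have hu : (1 : RatFunc ℚ) - q^2 * (q^2)^k ≠ 0 := hu_ne q hone k
    have hqM : q ^ M ≠ 0 := pow_ne_zero _ hq0
    have hqM1 : q ^ (M+1) ≠ 0 := pow_ne_zero _ hq0
    generalize qPoch q ((q ^ M)⁻¹) (2*k+1) = P
    generalize hgen : qPoch (q^2) (q^2) k = D at hDk ⊢
    have r1 : 1 - (q^(M+1))⁻¹ = (q^(M+1) - 1)/q^(M+1) := by field_simp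
    have r2 : 1 - (q^M)⁻¹ * q^(2*k+1) = (q^M - q^(2*k+1))/q^M := by field_simp
    have r3 : 1 - (q^M)⁻¹ * q^(2*k+1+1) = (q^M - q^(2*k+1+1))/q^M := by field_simp
    rw [r1, r2, r3]
    simp only [div_mul_eq_mul_div, mul_div_assoc', div_div]
    rw [div_sub_div _ _ (by apply_rules [mul_ne_zero, pow_ne_zero])
          (by apply_rules [mul_ne_zero, pow_ne_zero]),
        div_sub_div _ _ (by apply_rules [mul_ne_zero, pow_ne_zero])
          (by apply_rules [mul_ne_zero, pow_ne_zero]),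
        div_eq_div_iff (by apply_rules [mul_ne_zero, pow_ne_zero])
          (by apply_rules [mul_ne_zero, pow_ne_zero])]
    ring

lemma sum_step (M : ℕ) :
    ∑ i ∈ Finset.range (M+2), Tq q (M+1) i
      = q ^ M * ∑ i ∈ Finset.range (M+1), Tq q M i := by
  have hlast : Tq q M (M+1) = 0 := by
    unfold Tq
    rw [qPoch_zero_of_lt q hq0 M (2*(M+1)) (by omega)]
    simp
  have hext : ∑ i ∈ Finset.range (M+2), Tq q M i = ∑ i ∈ Finset.range (M+1), Tq q M i := by
    rw [Finset.sum_range_succ, hlast, add_zero]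
  have hGtop : Gq q M (M+2) = 0 := by
    show Gq q M (M+1+1) = 0
    simp only [Gq]
    rw [qPoch_zero_of_lt q hq0 M (2*(M+1)+1) (by omega)]
    simp
  have h1 : ∑ i ∈ Finset.range (M+2), (Tq q (M+1) i - q ^ M * Tq q M i) = 0 := by
    calc ∑ i ∈ Finset.range (M+2), (Tq q (M+1) i - q ^ M * Tq q M i)
        = ∑ i ∈ Finset.range (M+2), (Gq q M (i+1) - Gq q M i) :=
          Finset.sum_congr rfl fun i _ => t_sub q hq0 hone M i
      _ = Gq q M (M+2) - Gq q M 0 := Finset.sum_range_sub _ _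
      _ = 0 := by rw [hGtop]; simp [Gq]
  rw [Finset.sum_sub_distrib, ← Finset.mul_sum, sub_eq_zero] at h1
  rw [h1, hext]

lemma aux_main (M : ℕ) :
    q ^ (M * (M - 1) / 2) = ∑ i ∈ Finset.range (M + 1), Tq q M i := by
  induction M with
  | zero =>
    simp [Tq, qPoch]
  | succ M ih =>
    rw [sum_step q hq0 hone M, ← ih]
    have hdvd : 2 ∣ M * (M-1) := by
      rcases Nat.even_or_odd M with h | h
      · exact Dvd.dvd.mul_right h.two_dvd _
      · obtain ⟨m, hmm⟩ := h
        exact Dvd.dvd.mul_left (by omega) M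
    obtain ⟨c, hc⟩ := hdvd
    have h1 : (M+1) * (M+1-1) = 2*M + M*(M-1) := by
      cases M with
      | zero => rfl
      | succ m => simp only [Nat.succ_sub_one]; ring
    have hexp : (M+1) * (M+1-1) / 2 = M + M*(M-1)/2 := by
      rw [h1, hc]
      omega
    rw [hexp, pow_add]

end Aux

/-- The limiting q-Chu--Vandermonde identity. -/
theorem limiting_q_chu_vandermonde (M : ℕ) (q : RatFunc ℚ) (hq : q = RatFunc.X) :
    q ^ (M * (M - 1) / 2) =
      ∑ i ∈ Finset.range (M + 1),
        qPoch q (q ^ (-(M : ℤ))) (2 * i) / qPoch (q ^ 2) (q ^ 2) i *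
          (-1) ^ i * q ^ (-(i : ℤ) ^ 2 + 2 * i * M) := by
  subst hq
  have hq0 : (RatFunc.X : RatFunc ℚ) ≠ 0 := RatFunc.X_ne_zero
  have hone : ∀ n : ℕ, (RatFunc.X : RatFunc ℚ) ^ (n+1) ≠ 1 := by
    intro n h
    have h2 : (Polynomial.X : Polynomial ℚ) ^ (n+1) = 1 := by
      apply RatFunc.algebraMap_injective ℚ
      rw [map_pow, map_one, RatFunc.algebraMap_X]
      exact h
    have := congrArg Polynomial.natDegree h2
    simp [Polynomial.natDegree_X_pow] at this
  simpa only [Tq] using aux_main RatFunc.X hq0 hone M
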